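/- For every n ∈ ℕ and every s ∈ ℝ, |s| · |d/ds tanh(n·s)| = |s| · n · sech²(n·s) ≤ 4. -/

import Mathlib

open Real

lemma abs_le_cosh (x : ℝ) : |x| ≤ Real.cosh x := by
  rw [← Real.cosh_abs]
  calc |x| ≤ Real.sinh |x| := Real.self_le_sinh_iff.2 (abs_nonneg x)
    _ ≤ Real.cosh |x| := by
        nlinarith [Real.cosh_sub_sinh |x|, Real.exp_pos (-|x|)]

lemma hasDerivAt_tanh_comp (n : ℕ) (s : ℝ) :
    HasDerivAt (fun x : ℝ => Real.tanh ((n : ℝ) * x))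
      ((n : ℝ) * (1 / Real.cosh ((n : ℝ) * s)) ^ 2) s := by
  have hc := Real.hasDerivAt_cosh ((n : ℝ) * s)
  have hs := Real.hasDerivAt_sinh ((n : ℝ) * s)
  have hlin : HasDerivAt (fun x : ℝ => (n : ℝ) * x) (n : ℝ) s := by
    simpa using (hasDerivAt_id s).const_mul (n : ℝ)
  have hcosh_ne : Real.cosh ((n : ℝ) * s) ≠ 0 :=
    ne_of_gt (Real.cosh_pos _)
  have h := ((hs.comp s hlin).div (hc.comp s hlin) hcosh_ne)
  have heq : (fun x : ℝ => Real.sinh ((n : ℝ) * x) / Real.cosh ((n : ℝ) * x))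
      = fun x : ℝ => Real.tanh ((n : ℝ) * x) := by
    funext x; rw [Real.tanh_eq_sinh_div_cosh]
  simp only [Function.comp_def, Pi.div_def] at h
  rw [heq] at h
  refine h.congr_deriv ?_
  have h2 := Real.cosh_sq_sub_sinh_sq ((n : ℝ) * s)
  rw [one_div, inv_pow, ← div_eq_mul_inv, div_left_inj' (pow_ne_zero 2 hcosh_ne)]
  nlinarith [h2]

theorem stmt_10 (n : ℕ) (s : ℝ) :
    |s| * |deriv (fun x : ℝ => Real.tanh ((n : ℝ) * x)) s| =
        |s| * ((n : ℝ) * (1 / Real.cosh ((n : ℝ) * s)) ^ 2) ∧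
      |s| * ((n : ℝ) * (1 / Real.cosh ((n : ℝ) * s)) ^ 2) ≤ 4 := by
  have hd := (hasDerivAt_tanh_comp n s).deriv
  constructor
  · rw [hd]
    congr 1
    exact abs_of_nonneg (by positivity)
  · have h1 : |(n : ℝ) * s| ≤ Real.cosh ((n : ℝ) * s) := abs_le_cosh _
    have h2 : (1 : ℝ) ≤ Real.cosh ((n : ℝ) * s) := Real.one_le_cosh _
    have hpos : (0 : ℝ) < Real.cosh ((n : ℝ) * s) := Real.cosh_pos _
    have : |s| * ((n : ℝ) * (1 / Real.cosh ((n : ℝ) * s)) ^ 2)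
        = |(n : ℝ) * s| / Real.cosh ((n : ℝ) * s) ^ 2 := by
      rw [abs_mul, Nat.abs_cast]
      field_simp
    rw [this]
    rw [div_le_iff₀ (by positivity)]
    nlinarith
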